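/- Let m ≥ 2 and n ≥ 1 be integers and let x be a real number with 0 < x < π. Then ∑_{k=0}^{n} C(n-k+m, m) · cos((k+1/2)x) > 0. -/

import Mathlib

open Real Finset


private lemma key1 (x a : ℝ) :
    2 * Real.sin (x/2) * Real.cos (a + x/2) = Real.sin (a + x) - Real.sin a := by
  rw [show a + x = (a + x/2) + x/2 by ring]
  simp only [Real.sin_add, Real.cos_add]
  linear_combination (-Real.sin a) * Real.sin_sq_add_cos_sq (x/2)

private lemma key2 (x a : ℝ) :
    Real.cos (a + x) = Real.cos a - 2 * Real.sin (x/2) * Real.sin (a + x/2) := by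
  rw [show a + x = (a + x/2) + x/2 by ring]
  simp only [Real.sin_add, Real.cos_add]
  linear_combination (Real.cos a) * Real.sin_sq_add_cos_sq (x/2)

private lemma lemS (x : ℝ) : ∀ N : ℕ,
    2 * Real.sin (x/2) * ∑ k ∈ range N, Real.cos ((k + 1/2) * x) = Real.sin (N * x)
  | 0 => by simp
  | (N+1) => by
    rw [Finset.sum_range_succ, mul_add, lemS x N,
      show ((N:ℝ) + 1/2) * x = N*x + x/2 by ring, key1]
    push_cast
    rw [show ((N:ℝ) + 1) * x = N*x + x by ring]
    ring

private lemma lemA (x : ℝ) : ∀ n : ℕ,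
    4 * Real.sin (x/2)^2 * ∑ k ∈ range (n+1), ((n+1-k : ℕ):ℝ) * Real.cos ((k + 1/2) * x)
      = Real.cos (x/2) - Real.cos ((n + 3/2) * x)
  | 0 => by
    have h2 := key2 x (x/2)
    have h1 := key1 x 0
    simp only [zero_add, Real.sin_zero, sub_zero] at h1
    rw [show (x/2 : ℝ) + x/2 = x by ring] at h2
    simp only [Finset.sum_range_one, Nat.cast_ofNat, Nat.cast_one, Nat.sub_zero,
      Nat.cast_zero, zero_add]
    rw [show (3/2 : ℝ) * x = x/2 + x by ring, show (1/2 : ℝ) * x = x/2 by ring, h2]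
    linear_combination 2 * Real.sin (x/2) * h1
  | (n+1) => by
    have hsplit : ∑ k ∈ range (n+2), ((n+2-k : ℕ):ℝ) * Real.cos ((k + 1/2) * x)
        = (∑ k ∈ range (n+1), ((n+1-k : ℕ):ℝ) * Real.cos ((k + 1/2) * x))
          + ∑ k ∈ range (n+2), Real.cos ((k + 1/2) * x) := by
      have e1 : ∑ k ∈ range (n+2), ((n+2-k : ℕ):ℝ) * Real.cos ((k + 1/2) * x)
          = ∑ k ∈ range (n+2), (((n+1-k : ℕ):ℝ) * Real.cos ((k + 1/2) * x)
              + Real.cos ((k + 1/2) * x)) := by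
        apply Finset.sum_congr rfl
        intro k hk
        have hk' : k ≤ n + 1 := by simpa [Nat.lt_succ_iff] using hk
        have : (n+2-k : ℕ) = (n+1-k) + 1 := by omega
        rw [this]
        push_cast
        ring
      rw [e1, Finset.sum_add_distrib, Finset.sum_range_succ (fun k => ((n+1-k : ℕ):ℝ) * Real.cos ((k + 1/2) * x))]
      simp
    rw [hsplit, mul_add, lemA x n]
    have hS := lemS x (n+2)
    have h2 := key2 x ((n + 3/2) * x)
    rw [show ((n:ℝ) + 3/2) * x + x/2 = ((n:ℕ)+2 : ℕ) * x by push_cast; ring] at h2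
    rw [show ((n:ℝ) + 3/2) * x + x = (((n:ℕ)+1 : ℕ):ℝ) * x + 3/2 * x by push_cast; ring] at h2
    push_cast at h2 hS ⊢
    rw [show ((n:ℝ) + 1 + 3/2) * x = ((n:ℝ) + 1) * x + 3/2 * x by ring]
    linear_combination 2 * Real.sin (x/2) * hS + h2

private lemma ch2 (a : ℕ) : (a+1).choose 2 = a.choose 2 + a := by
  rw [show (2:ℕ) = 1+1 from rfl, Nat.choose_succ_succ, Nat.choose_one_right, Nat.add_comm]

private lemma lemB (x : ℝ) : ∀ n : ℕ,
    8 * Real.sin (x/2)^3 * ∑ k ∈ range (n+1), (((n-k+2).choose 2 : ℕ):ℝ) * Real.cos ((k + 1/2) * x)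
      = ((n:ℝ) + 2) * Real.sin x - Real.sin (((n:ℝ) + 2) * x)
  | 0 => by
    have h0 := key1 x 0
    simp only [zero_add, Real.sin_zero, sub_zero] at h0
    have h1 := key1 x x
    rw [show x + x/2 = x/2 + x by ring] at h1
    have h2 := key2 x (x/2)
    rw [show (x/2 : ℝ) + x/2 = x by ring] at h2
    simp only [Finset.sum_range_one, Nat.sub_zero, Nat.cast_zero, zero_add]
    norm_num
    rw [show (2:ℝ) * x = x + x by ring, show (1/2:ℝ) * x = x/2 by ring]
    linear_combination (1 + 4*Real.sin (x/2)^2) * h0 - h1 + 2*Real.sin (x/2) * h2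
  | (n+1) => by
    have hsplit : ∑ k ∈ range (n+2), (((n+1-k+2).choose 2 : ℕ):ℝ) * Real.cos ((k + 1/2) * x)
        = (∑ k ∈ range (n+1), (((n-k+2).choose 2 : ℕ):ℝ) * Real.cos ((k + 1/2) * x))
          + ∑ k ∈ range (n+2), ((n+2-k : ℕ):ℝ) * Real.cos ((k + 1/2) * x) := by
      rw [Finset.sum_range_succ, Finset.sum_range_succ
        (fun k => ((n+2-k : ℕ):ℝ) * Real.cos ((k + 1/2) * x))]
      have e1 : ∑ k ∈ range (n+1), (((n+1-k+2).choose 2 : ℕ):ℝ) * Real.cos ((k + 1/2) * x)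
          = ∑ k ∈ range (n+1), ((((n-k+2).choose 2 : ℕ):ℝ) * Real.cos ((k + 1/2) * x)
              + ((n+2-k : ℕ):ℝ) * Real.cos ((k + 1/2) * x)) := by
        apply Finset.sum_congr rfl
        intro k hk
        have hk' : k ≤ n := by simpa [Nat.lt_succ_iff] using hk
        have e2 : (n+1-k+2 : ℕ) = (n-k+2) + 1 := by omega
        have e3 : (n+2-k : ℕ) = n-k+2 := by omega
        rw [e2, e3, ch2]
        push_cast
        ring
      rw [e1, Finset.sum_add_distrib]
      simp
      ring
    rw [hsplit, mul_add, lemB x n]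
    have hA := lemA x (n+1)
    have h0 := key1 x 0
    simp only [zero_add, Real.sin_zero, sub_zero] at h0
    have hk := key1 x (((n:ℝ)+2) * x)
    rw [show ((n:ℝ)+2) * x + x/2 = ((n:ℝ)+1 + 3/2) * x by ring] at hk
    rw [show ((n:ℝ)+2) * x + x = ((n:ℝ)+1+2) * x by ring] at hk
    push_cast at hA ⊢
    have e : 8 * Real.sin (x/2)^3 * ∑ k ∈ range (n+2), ((n+2-k : ℕ):ℝ) * Real.cos ((k + 1/2) * x)
        = 2 * Real.sin (x/2) * (Real.cos (x/2) - Real.cos (((n:ℝ)+1 + 3/2) * x)) := by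
      rw [← hA]; ring
    rw [e]
    linear_combination h0 - hk


private lemma abs_sin_nat (x : ℝ) (hs : 0 ≤ Real.sin x) : ∀ N : ℕ,
    |Real.sin (N * x)| ≤ N * Real.sin x
  | 0 => by simp
  | (N+1) => by
    have ih := abs_sin_nat x hs N
    rw [show (((N+1 : ℕ)):ℝ) * x = N*x + x by push_cast; ring, Real.sin_add]
    calc |Real.sin (N*x) * Real.cos x + Real.cos (N*x) * Real.sin x|
        ≤ |Real.sin (N*x) * Real.cos x| + |Real.cos (N*x) * Real.sin x| := abs_add_le _ _
      _ = |Real.sin (N*x)| * |Real.cos x| + |Real.cos (N*x)| * |Real.sin x| := by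
          rw [abs_mul, abs_mul]
      _ ≤ (N * Real.sin x) * 1 + 1 * Real.sin x := by
          apply add_le_add
          · exact mul_le_mul ih (Real.abs_cos_le_one x) (abs_nonneg _)
              (by positivity)
          · rw [abs_of_nonneg hs]
            exact mul_le_mul_of_nonneg_right (Real.abs_cos_le_one _) hs
      _ = (((N+1:ℕ)):ℝ) * Real.sin x := by push_cast; ring

private lemma sin_lt_nat (x : ℝ) (hx : 0 < x) (hx' : x < π) {N : ℕ} (hN : 2 ≤ N) :
    Real.sin (N * x) < N * Real.sin x := by
  obtain ⟨r, rfl⟩ : ∃ r, N = r + 2 := ⟨N - 2, by omega⟩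
  have hsx : 0 < Real.sin x := Real.sin_pos_of_pos_of_lt_pi hx hx'
  have hc : |Real.cos x| < 1 := by
    nlinarith [Real.sin_sq_add_cos_sq x, sq_abs (Real.cos x), abs_nonneg (Real.cos x)]
  have h2x : |Real.sin (2*x)| < 2 * Real.sin x := by
    rw [Real.sin_two_mul, abs_mul, abs_mul, abs_of_nonneg hsx.le]
    have : |(2:ℝ)| = 2 := by norm_num
    rw [this]
    nlinarith [hc, hsx]
  have hr := abs_sin_nat x hsx.le r
  have hco : |Real.cos (2*x)| ≤ 1 := Real.abs_cos_le_one _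
  have hcr : |Real.cos (r*x)| ≤ 1 := Real.abs_cos_le_one _
  have e : (((r+2:ℕ)):ℝ) * x = r*x + 2*x := by push_cast; ring
  calc Real.sin ((((r+2:ℕ)):ℝ) * x) ≤ |Real.sin ((((r+2:ℕ)):ℝ) * x)| := le_abs_self _
    _ = |Real.sin (r*x) * Real.cos (2*x) + Real.cos (r*x) * Real.sin (2*x)| := by
        rw [e, Real.sin_add]
    _ ≤ |Real.sin (r*x)| * |Real.cos (2*x)| + |Real.cos (r*x)| * |Real.sin (2*x)| := by
        rw [← abs_mul, ← abs_mul]; exact abs_add_le _ _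
    _ ≤ (r * Real.sin x) * 1 + 1 * |Real.sin (2*x)| := by
        apply add_le_add
        · exact mul_le_mul hr hco (abs_nonneg _) (by positivity)
        · exact mul_le_mul_of_nonneg_right hcr (abs_nonneg _)
    _ < r * Real.sin x + 2 * Real.sin x := by
        rw [mul_one, one_mul]
        exact add_lt_add_right h2x _
    _ = (((r+2:ℕ)):ℝ) * Real.sin x := by push_cast; ring


private lemma sumId (m : ℕ) (x : ℝ) : ∀ n : ℕ,
    ∑ k ∈ range (n+1), (((n-k+(m+1)).choose (m+1) : ℕ):ℝ) * Real.cos ((k + 1/2) * x)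
      = ∑ j ∈ range (n+1), ∑ k ∈ range (j+1),
          (((j-k+m).choose m : ℕ):ℝ) * Real.cos ((k + 1/2) * x)
  | 0 => by simp
  | (n+1) => by
    rw [Finset.sum_range_succ (fun j => ∑ k ∈ range (j+1),
      (((j-k+m).choose m : ℕ):ℝ) * Real.cos ((k + 1/2) * x)), ← sumId m x n]
    have e1 : ∀ k ∈ range (n+2),
        (((n+1-k+(m+1)).choose (m+1) : ℕ):ℝ) * Real.cos ((k + 1/2) * x)
          = (((n+1-k+m).choose (m+1) : ℕ):ℝ) * Real.cos ((k + 1/2) * x)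
            + (((n+1-k+m).choose m : ℕ):ℝ) * Real.cos ((k + 1/2) * x) := by
      intro k hk
      have : (n+1-k+(m+1)).choose (m+1) = (n+1-k+m).choose (m+1) + (n+1-k+m).choose m := by
        have e : n+1-k+(m+1) = (n+1-k+m) + 1 := by omega
        rw [e, Nat.choose_succ_succ, Nat.add_comm]
      rw [this]
      push_cast
      ring
    rw [Finset.sum_congr rfl e1, Finset.sum_add_distrib]
    congr 1
    rw [Finset.sum_range_succ (fun k => (((n+1-k+m).choose (m+1) : ℕ):ℝ) * Real.cos ((k + 1/2) * x))]
    have hz : ((n+1-(n+1)+m).choose (m+1) : ℕ) = 0 :=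
      Nat.choose_eq_zero_of_lt (by omega)
    simp only [hz, Nat.cast_zero, zero_mul, add_zero]
    apply Finset.sum_congr rfl
    intro k hk
    have hk' : k ≤ n := by simpa [Nat.lt_succ_iff] using hk
    have : n+1-k+m = n-k+(m+1) := by omega
    rw [this]

private lemma posAll (x : ℝ) (hx : 0 < x) (hx' : x < π) :
    ∀ m, 2 ≤ m → ∀ n : ℕ,
      0 < ∑ k ∈ range (n+1), (((n-k+m).choose m : ℕ):ℝ) * Real.cos ((k + 1/2) * x) := by
  intro m hm
  induction m, hm using Nat.le_induction with
  | base =>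
    intro n
    have hs : 0 < Real.sin (x/2) :=
      Real.sin_pos_of_pos_of_lt_pi (by linarith) (by linarith [Real.pi_pos])
    have h8 : 0 < 8 * Real.sin (x/2)^3 := by positivity
    have hB := lemB x n
    have hlt := sin_lt_nat x hx hx' (N:=n+2) (by omega)
    push_cast at hlt
    have hpos : 0 < 8 * Real.sin (x/2)^3 *
        ∑ k ∈ range (n+1), (((n-k+2).choose 2 : ℕ):ℝ) * Real.cos ((k + 1/2) * x) := by
      rw [hB]; linarith
    by_contra h
    push_neg at h
    exact absurd hpos (not_lt.mpr (mul_nonpos_of_nonneg_of_nonpos h8.le h))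
  | succ m hm ih =>
    intro n
    rw [sumId m x n]
    apply Finset.sum_pos
    · intro j _
      exact ih j
    · exact ⟨0, Finset.mem_range.mpr (by omega)⟩

theorem stmt_2 (m n : ℕ) (hm : 2 ≤ m) (hn : 1 ≤ n) (x : ℝ) (hx : 0 < x) (hx' : x < π) :
    0 < ∑ k ∈ Finset.range (n + 1), ((n - k + m).choose m : ℝ) * Real.cos ((k + 1/2) * x) :=
  posAll x hx hx' m hm n
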